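/- Let d = 2 and let G = (V,E) be a strongly connected directed graph on vertices {1,…,n}. Let P = {(i,i) : 1 ≤ i ≤ n} ∪ E be the admissible index set, and identify each function a : P → ℝ with the matrix A = [a_ij] given by a_ij = a(i,j) for (i,j) ∈ P and a_ij = 0 otherwise. Then the set of functions a : P → ℝ such that (i) a(p) > 0 for all p ∈ P, (ii) A is strictly diagonally dominant, and (iii) there exists a fixed point x of the consensus map f_A that is not an antipodal-consensus configuration, has Lebesgue measure zero in ℝ^P ≅ ℝ^{n + |E|}. -/

import Mathlib

open scoped BigOperators

noncomputable section

/-- The weight matrix associated with a function `a` on the admissible index set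
`P = {(i,i)} ∪ E`: entries off `P` are zero. -/
def wmOf {n : ℕ} (E : Fin n → Fin n → Prop) [DecidableRel E]
    (a : {p : Fin n × Fin n // p.1 = p.2 ∨ E p.1 p.2} → ℝ) : Matrix (Fin n) (Fin n) ℝ :=
  Matrix.of fun i j => if h : i = j ∨ E i j then a ⟨(i, j), h⟩ else 0

namespace Stmt18Aux

open MeasureTheory

variable {n : ℕ} (E : Fin n → Fin n → Prop) [DecidableRel E]

abbrev WSp (n : ℕ) (E : Fin n → Fin n → Prop) [DecidableRel E] : Type :=
  {p : Fin n × Fin n // p.1 = p.2 ∨ E p.1 p.2} → ℝ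

def sgn (c : Bool) : ℝ := if c then 1 else -1

lemma wm_apply (b : WSp n E) (i j : Fin n) :
    wmOf E b i j = if h : i = j ∨ E i j then b ⟨(i, j), h⟩ else 0 := rfl

lemma wm_differentiable (i j : Fin n) :
    Differentiable ℝ (fun b : WSp n E => wmOf E b i j) := by
  by_cases h : i = j ∨ E i j
  · simp only [wm_apply, dif_pos h]
    exact (ContinuousLinearMap.proj (R := ℝ) (φ := fun _ => ℝ)
      (⟨(i, j), h⟩ : {p : Fin n × Fin n // p.1 = p.2 ∨ E p.1 p.2})).differentiable
  · simp only [wm_apply, dif_neg h]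
    exact differentiable_const 0

def thF (pf κ jf : Fin n → Fin n) (b : WSp n E) (v : Fin n) : ℝ :=
  wmOf E b (κ (pf v)) (jf (κ (pf v)))

lemma thF_differentiable (pf κ jf : Fin n → Fin n) (v : Fin n) :
    Differentiable ℝ (fun b : WSp n E => thF E pf κ jf b v) :=
  wm_differentiable E _ _

def cf (pf : Fin n → Fin n) (σ : Fin n → Bool) (κ jf : Fin n → Fin n)
    (b : WSp n E) (i j' : Fin n) : ℝ :=
  sgn (σ i) * sgn (σ j') * Real.sin (thF E pf κ jf b j' - thF E pf κ jf b i)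

lemma cf_differentiable (pf : Fin n → Fin n) (σ : Fin n → Bool) (κ jf : Fin n → Fin n)
    (i j' : Fin n) :
    Differentiable ℝ (fun b : WSp n E => cf E pf σ κ jf b i j') := by
  apply Differentiable.const_mul
  exact Real.differentiable_sin.comp
    ((thF_differentiable E pf κ jf j').sub (thF_differentiable E pf κ jf i))

lemma cf_continuous (pf : Fin n → Fin n) (σ : Fin n → Bool) (κ jf : Fin n → Fin n)
    (i j' : Fin n) :
    Continuous (fun b : WSp n E => cf E pf σ κ jf b i j') :=
  (cf_differentiable E pf σ κ jf i j').continuous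

def Gm (pf : Fin n → Fin n) (σ : Fin n → Bool) (κ jf : Fin n → Fin n)
    (Cs : Finset (Fin n)) (b : WSp n E) : WSp n E :=
  fun q => if q.1.1 ∈ Cs ∧ q.1.2 = jf q.1.1 then
      -(∑ j' ∈ Finset.univ.erase (jf q.1.1),
          wmOf E b q.1.1 j' * cf E pf σ κ jf b q.1.1 j') / cf E pf σ κ jf b q.1.1 (jf q.1.1)
    else b q

def Nset (jf : Fin n → Fin n) (istar : Fin n) : Set (WSp n E) :=
  {b | (istar = jf istar ∨ E istar (jf istar)) ∧ wmOf E b istar (jf istar) = 0}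

def Uset (pf : Fin n → Fin n) (σ : Fin n → Bool) (κ jf : Fin n → Fin n)
    (Cs : Finset (Fin n)) : Set (WSp n E) :=
  {b | ∀ i ∈ Cs, cf E pf σ κ jf b i (jf i) ≠ 0}

lemma volume_coord_zero {ι : Type*} [Fintype ι] (q0 : ι) :
    volume {b : ι → ℝ | b q0 = 0} = 0 := by
  classical
  have h : {b : ι → ℝ | b q0 = 0}
      = Set.pi Set.univ (fun q => if q = q0 then ({0} : Set ℝ) else Set.univ) := by
    ext b
    simp only [Set.mem_setOf_eq, Set.mem_pi, Set.mem_univ, forall_true_left]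
    constructor
    · intro hb q
      by_cases hq : q = q0 <;> simp [hq, hb]
    · intro hb
      have := hb q0
      simpa using this
  rw [h, volume_pi_pi]
  refine Finset.prod_eq_zero (Finset.mem_univ q0) ?_
  simp

lemma volume_Nset (jf : Fin n → Fin n) (istar : Fin n) :
    volume (Nset E jf istar) = 0 := by
  classical
  by_cases h : istar = jf istar ∨ E istar (jf istar)
  · have heq : Nset E jf istar = {b : WSp n E | b ⟨(istar, jf istar), h⟩ = 0} := by
      ext b
      simp [Nset, wm_apply, h]
    rw [heq]
    exact volume_coord_zero _
  · have heq : Nset E jf istar = ∅ := by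
      ext b; simp [Nset, h]
    simp [heq]

lemma measurable_Nset (jf : Fin n → Fin n) (istar : Fin n) :
    MeasurableSet (Nset E jf istar) := by
  classical
  by_cases h : istar = jf istar ∨ E istar (jf istar)
  · have heq : Nset E jf istar = {b : WSp n E | b ⟨(istar, jf istar), h⟩ = 0} := by
      ext b
      simp [Nset, wm_apply, h]
    rw [heq]
    exact measurableSet_eq_fun (measurable_pi_apply _) measurable_const
  · have heq : Nset E jf istar = ∅ := by
      ext b; simp [Nset, h]
    simp [heq]

lemma measurable_Uset (pf : Fin n → Fin n) (σ : Fin n → Bool) (κ jf : Fin n → Fin n)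
    (Cs : Finset (Fin n)) :
    MeasurableSet (Uset E pf σ κ jf Cs) := by
  have h : Uset E pf σ κ jf Cs
      = ⋂ i, ⋂ (_ : i ∈ Cs), {b : WSp n E | cf E pf σ κ jf b i (jf i) ≠ 0} := by
    ext b; simp [Uset]
  rw [h]
  refine MeasurableSet.iInter fun i => MeasurableSet.iInter fun _ => ?_
  exact (measurableSet_eq_fun (cf_continuous E pf σ κ jf i (jf i)).measurable
    measurable_const).compl

lemma Gm_differentiableAt (pf : Fin n → Fin n) (σ : Fin n → Bool) (κ jf : Fin n → Fin n)
    (Cs : Finset (Fin n)) {b : WSp n E} (hb : b ∈ Uset E pf σ κ jf Cs) :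
    DifferentiableAt ℝ (Gm E pf σ κ jf Cs) b := by
  classical
  rw [differentiableAt_pi]
  intro q
  have h : (fun b : WSp n E => Gm E pf σ κ jf Cs b q)
      = (fun b : WSp n E => if q.1.1 ∈ Cs ∧ q.1.2 = jf q.1.1 then
          -(∑ j' ∈ Finset.univ.erase (jf q.1.1),
              wmOf E b q.1.1 j' * cf E pf σ κ jf b q.1.1 j')
            / cf E pf σ κ jf b q.1.1 (jf q.1.1)
        else b q) := rfl
  rw [h]
  by_cases hq : q.1.1 ∈ Cs ∧ q.1.2 = jf q.1.1
  · simp only [if_pos hq]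
    have h1 : DifferentiableAt ℝ (fun b : WSp n E =>
        -(∑ j' ∈ Finset.univ.erase (jf q.1.1),
          wmOf E b q.1.1 j' * cf E pf σ κ jf b q.1.1 j')) b := by
      apply DifferentiableAt.neg
      apply DifferentiableAt.fun_sum
      intro j' _
      exact ((wm_differentiable E q.1.1 j').differentiableAt).mul
        ((cf_differentiable E pf σ κ jf q.1.1 j').differentiableAt)
    have h2 : DifferentiableAt ℝ (fun b : WSp n E =>
        cf E pf σ κ jf b q.1.1 (jf q.1.1)) b :=
      (cf_differentiable E pf σ κ jf q.1.1 (jf q.1.1)).differentiableAt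
    simp only [div_eq_mul_inv]
    exact h1.mul (h2.inv (hb q.1.1 hq.1))
  · simp only [if_neg hq]
    exact ((ContinuousLinearMap.proj (R := ℝ) (φ := fun _ => ℝ) q).differentiable).differentiableAt

lemma volume_Gm_image (pf : Fin n → Fin n) (σ : Fin n → Bool) (κ jf : Fin n → Fin n)
    (Cs : Finset (Fin n)) (istar : Fin n) :
    volume (Gm E pf σ κ jf Cs '' (Nset E jf istar ∩ Uset E pf σ κ jf Cs)) = 0 := by
  set s := Nset E jf istar ∩ Uset E pf σ κ jf Cs with hs
  have hmeas : MeasurableSet s :=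
    (measurable_Nset E jf istar).inter (measurable_Uset E pf σ κ jf Cs)
  have hnull : volume s = 0 :=
    measure_mono_null Set.inter_subset_left (volume_Nset E jf istar)
  have hder : ∀ b ∈ s, HasFDerivWithinAt (Gm E pf σ κ jf Cs)
      (fderiv ℝ (Gm E pf σ κ jf Cs) b) s b := by
    intro b hb
    exact ((Gm_differentiableAt E pf σ κ jf Cs hb.2).hasFDerivAt).hasFDerivWithinAt
  have hle := MeasureTheory.addHaar_image_le_lintegral_abs_det_fderiv volume hmeas hder
  rw [MeasureTheory.setLIntegral_measure_zero _ _ hnull] at hle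
  exact le_antisymm hle zero_le

lemma exists_angle (x0 x1 : ℝ) (h : x0 ^ 2 + x1 ^ 2 = 1) :
    ∃ t, x0 = Real.cos t ∧ x1 = Real.sin t := by
  have hz : (⟨x0, x1⟩ : ℂ) ≠ 0 := by
    intro h0
    rw [Complex.ext_iff] at h0
    simp only [Complex.zero_re, Complex.zero_im] at h0
    rw [h0.1, h0.2] at h
    norm_num at h
  have habs : ‖(⟨x0, x1⟩ : ℂ)‖ = 1 := by
    rw [Complex.norm_def, Complex.normSq_mk]
    rw [show x0 * x0 + x1 * x1 = 1 by nlinarith]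
    exact Real.sqrt_one
  refine ⟨Complex.arg ⟨x0, x1⟩, ?_, ?_⟩
  · rw [Complex.cos_arg hz, habs]; simp
  · rw [Complex.sin_arg, habs]; simp

lemma es2_ext (u v : EuclideanSpace ℝ (Fin 2)) (h0 : u 0 = v 0) (h1 : u 1 = v 1) : u = v := by
  apply PiLp.ext
  intro k
  fin_cases k <;> assumption

lemma coords_of_unit (u : EuclideanSpace ℝ (Fin 2)) (h : ‖u‖ = 1) :
    (u 0) ^ 2 + (u 1) ^ 2 = 1 := by
  have h1 := EuclideanSpace.norm_eq u
  rw [h] at h1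
  have h2 : (∑ i, ‖u i‖ ^ 2) = 1 := by
    have h3 := h1.symm
    rwa [Real.sqrt_eq_one] at h3
  rw [Fin.sum_univ_two] at h2
  simpa [Real.norm_eq_abs, sq_abs] using h2

lemma cos_pm_one {t : ℝ} (h : Real.sin t = 0) : Real.cos t = 1 ∨ Real.cos t = -1 := by
  have h1 := Real.sin_sq_add_cos_sq t
  rw [h] at h1
  have h2 : (Real.cos t - 1) * (Real.cos t + 1) = 0 := by nlinarith
  rcases mul_eq_zero.mp h2 with h3 | h3
  · left; linarith
  · right; linarith

lemma sin_shift (A B C : ℝ) (hB : Real.sin B = 0) (hC : Real.sin C = 0) :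
    Real.sin (A + B - C) = Real.cos C * Real.cos B * Real.sin A := by
  rw [Real.sin_sub, Real.sin_add, Real.cos_add, hB, hC]
  ring

end Stmt18Aux

/-- for `d = 2` and a strongly connected directed graph `G = (V, E)`, the
set of weight functions `a : P → ℝ` on the admissible index set `P = {(i,i)} ∪ E` that
are positive, give a strictly diagonally dominant weight matrix, and admit a fixed point
of the consensus map that is not an antipodal-consensus configuration, has Lebesgue
measure zero in `ℝ^P`. -/
theorem stmt_18 (n : ℕ) (hn : 1 ≤ n)
    (E : Fin n → Fin n → Prop) [DecidableRel E]
    (hconn : ∀ i j, Relation.ReflTransGen E i j) :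
    MeasureTheory.volume
      {a : {p : Fin n × Fin n // p.1 = p.2 ∨ E p.1 p.2} → ℝ |
        (∀ p, 0 < a p) ∧
        (∀ i, ∑ j ∈ Finset.univ.erase i, wmOf E a i j < wmOf E a i i) ∧
        ∃ x : Fin n → EuclideanSpace ℝ (Fin 2),
          (∀ i, ‖x i‖ = 1) ∧
          (∀ i, ‖∑ j, wmOf E a i j • x j‖⁻¹ • ∑ j, wmOf E a i j • x j = x i) ∧
          ¬ ∃ (xbar : EuclideanSpace ℝ (Fin 2)) (s : Fin n → ℝ),
              ‖xbar‖ = 1 ∧ (∀ i, s i = 1 ∨ s i = -1) ∧ ∀ i, x i = s i • xbar} = 0 := by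
  classical
  have hcover : {a : {p : Fin n × Fin n // p.1 = p.2 ∨ E p.1 p.2} → ℝ |
        (∀ p, 0 < a p) ∧
        (∀ i, ∑ j ∈ Finset.univ.erase i, wmOf E a i j < wmOf E a i i) ∧
        ∃ x : Fin n → EuclideanSpace ℝ (Fin 2),
          (∀ i, ‖x i‖ = 1) ∧
          (∀ i, ‖∑ j, wmOf E a i j • x j‖⁻¹ • ∑ j, wmOf E a i j • x j = x i) ∧
          ¬ ∃ (xbar : EuclideanSpace ℝ (Fin 2)) (s : Fin n → ℝ),
              ‖xbar‖ = 1 ∧ (∀ i, s i = 1 ∨ s i = -1) ∧ ∀ i, x i = s i • xbar}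
      ⊆ ⋃ δ : (Fin n → Fin n) × (Fin n → Bool) × (Fin n → Fin n) × (Fin n → Fin n) ×
            Finset (Fin n) × Fin n,
          Stmt18Aux.Gm E δ.1 δ.2.1 δ.2.2.1 δ.2.2.2.1 δ.2.2.2.2.1 ''
            (Stmt18Aux.Nset E δ.2.2.2.1 δ.2.2.2.2.2 ∩
              Stmt18Aux.Uset E δ.1 δ.2.1 δ.2.2.1 δ.2.2.2.1 δ.2.2.2.2.1) := by
    rintro a ⟨-, -, x, hx1, hfix, hnot⟩
    -- choose angles
    have hang : ∀ i, ∃ t, x i 0 = Real.cos t ∧ x i 1 = Real.sin t := fun i =>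
      Stmt18Aux.exists_angle _ _ (Stmt18Aux.coords_of_unit (x i) (hx1 i))
    choose θ hθc hθs using hang
    set i0 : Fin n := ⟨0, hn⟩ with hi0
    have hrefl : ∀ i, Real.sin (θ i - θ i) = 0 := by intro i; simp
    have hsymm : ∀ i j, Real.sin (θ j - θ i) = 0 → Real.sin (θ i - θ j) = 0 := by
      intro i j h
      have he : θ i - θ j = -(θ j - θ i) := by ring
      rw [he, Real.sin_neg, h, neg_zero]
    have htrans : ∀ i j k, Real.sin (θ j - θ i) = 0 → Real.sin (θ k - θ j) = 0 →
        Real.sin (θ k - θ i) = 0 := by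
      intro i j k h1 h2
      have he : θ k - θ i = (θ k - θ j) + (θ j - θ i) := by ring
      rw [he, Real.sin_add, h1, h2]
      ring
    -- non-antipodality gives two classes
    have hw : ∃ w, Real.sin (θ w - θ i0) ≠ 0 := by
      by_contra hcon
      push_neg at hcon
      apply hnot
      refine ⟨x i0, fun i => Real.cos (θ i - θ i0), hx1 i0,
        fun i => Stmt18Aux.cos_pm_one (hcon i), ?_⟩
      intro i
      have e0 : θ i - θ i0 + θ i0 = θ i := by ring
      apply Stmt18Aux.es2_ext
      · show x i 0 = (Real.cos (θ i - θ i0) • x i0) 0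
        rw [PiLp.smul_apply, smul_eq_mul, hθc i, hθc i0]
        conv_lhs => rw [← e0]
        rw [Real.cos_add, hcon i]
        ring
      · show x i 1 = (Real.cos (θ i - θ i0) • x i0) 1
        rw [PiLp.smul_apply, smul_eq_mul, hθs i, hθs i0]
        conv_lhs => rw [← e0]
        rw [Real.sin_add, hcon i]
        ring
    -- representatives
    set pf : Fin n → Fin n := fun i =>
      (Finset.univ.filter fun k => Real.sin (θ k - θ i) = 0).min'
        ⟨i, Finset.mem_filter.mpr ⟨Finset.mem_univ i, hrefl i⟩⟩ with hpfdef
    have hcls : ∀ i j, Real.sin (θ j - θ i) = 0 →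
        (Finset.univ.filter fun k => Real.sin (θ k - θ i) = 0) =
        (Finset.univ.filter fun k => Real.sin (θ k - θ j) = 0) := by
      intro i j hij
      ext k
      simp only [Finset.mem_filter, Finset.mem_univ, true_and]
      constructor
      · intro hk; exact htrans j i k (hsymm i j hij) hk
      · intro hk; exact htrans i j k hij hk
    have hpf_rel : ∀ i, Real.sin (θ (pf i) - θ i) = 0 := by
      intro i
      have hm : pf i ∈ Finset.univ.filter (fun k => Real.sin (θ k - θ i) = 0) := by
        rw [hpfdef]; exact Finset.min'_mem _ _
      exact (Finset.mem_filter.mp hm).2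
    have hpf_eq : ∀ i j, Real.sin (θ j - θ i) = 0 → pf i = pf j := by
      intro i j hij
      have h1 := hcls i j hij
      apply le_antisymm
      · refine Finset.min'_le _ _ ?_
        rw [h1]
        exact Finset.min'_mem _ _
      · refine Finset.min'_le _ _ ?_
        rw [← h1]
        exact Finset.min'_mem _ _
    have hpfpf : ∀ v, pf (pf v) = pf v := fun v => (hpf_eq v (pf v) (hpf_rel v)).symm
    -- signs
    set sfun : Fin n → ℝ := fun i => Real.cos (θ i - θ (pf i)) with hsfun
    have hs1 : ∀ i, sfun i = 1 ∨ sfun i = -1 := fun i =>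
      Stmt18Aux.cos_pm_one (hsymm i (pf i) (hpf_rel i))
    set σb : Fin n → Bool := fun i => decide (sfun i = 1) with hσb
    have hsgn : ∀ i, Stmt18Aux.sgn (σb i) = sfun i := by
      intro i
      by_cases h : sfun i = 1
      · have ht : σb i = true := by rw [hσb]; simp [h]
        rw [ht, h]; rfl
      · rcases hs1 i with h1 | h1
        · exact absurd h1 h
        · have hf : σb i = false := by rw [hσb]; simp [h]
          rw [hf, h1]; rfl
    -- cross vertices
    set Cs : Finset (Fin n) :=
      Finset.univ.filter (fun i => ∃ j, E i j ∧ Real.sin (θ j - θ i) ≠ 0) with hCsdef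
    set jfn : Fin n → Fin n := fun i =>
      if h : ∃ j, E i j ∧ Real.sin (θ j - θ i) ≠ 0 then h.choose else i with hjfndef
    have hjf : ∀ i ∈ Cs, E i (jfn i) ∧ Real.sin (θ (jfn i) - θ i) ≠ 0 := by
      intro i hi
      have hex : ∃ j, E i j ∧ Real.sin (θ j - θ i) ≠ 0 := by
        rw [hCsdef] at hi
        exact (Finset.mem_filter.mp hi).2
      rw [hjfndef]
      simp only [dif_pos hex]
      exact hex.choose_spec
    -- connectivity claim
    have claimA : ∀ u v, Relation.ReflTransGen E u v → Real.sin (θ v - θ u) ≠ 0 →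
        ∃ y, Real.sin (θ y - θ u) = 0 ∧ y ∈ Cs := by
      intro u v hpath
      induction hpath using Relation.ReflTransGen.head_induction_on with
      | refl => intro hne; exact absurd (hrefl v) hne
      | head h h' ih =>
        rename_i p q
        intro hne
        by_cases hpq : Real.sin (θ q - θ p) = 0
        · have hvq : Real.sin (θ v - θ q) ≠ 0 := fun h0 => hne (htrans p q v hpq h0)
          obtain ⟨y, hy1, hy2⟩ := ih hvq
          exact ⟨y, htrans p q y hpq hy1, hy2⟩
        · refine ⟨p, hrefl p, ?_⟩
          rw [hCsdef]
          exact Finset.mem_filter.mpr ⟨Finset.mem_univ p, ⟨q, h, hpq⟩⟩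
    have hκex : ∀ u, ∃ y, Real.sin (θ y - θ u) = 0 ∧ y ∈ Cs := by
      intro u
      obtain ⟨w, hwne⟩ := hw
      by_cases h0 : Real.sin (θ i0 - θ u) = 0
      · refine claimA u w (hconn u w) ?_
        intro hz
        exact hwne (htrans i0 u w (hsymm u i0 h0) hz)
      · exact claimA u i0 (hconn u i0) h0
    set κfun : Fin n → Fin n := fun u => (hκex u).choose with hκdef
    have hκrel : ∀ u, Real.sin (θ (κfun u) - θ u) = 0 := by
      intro u; rw [hκdef]; exact (hκex u).choose_spec.1
    have hκC : ∀ u, κfun u ∈ Cs := by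
      intro u; rw [hκdef]; exact (hκex u).choose_spec.2
    have hpfκ : ∀ u, pf (κfun (pf u)) = pf u := by
      intro u
      have h1 := hpf_eq (pf u) (κfun (pf u)) (hκrel (pf u))
      rw [← h1, hpfpf]
    set istar : Fin n := κfun (pf i0) with histdef
    have histC : istar ∈ Cs := hκC (pf i0)
    have hEistar : E istar (jfn istar) := (hjf istar histC).1
    -- the preimage point b
    set b : Stmt18Aux.WSp n E := fun q =>
      if q.1.1 ∈ Cs ∧ q.1.2 = jfn q.1.1 then θ (pf q.1.1) - θ (pf i0) else a q with hbdef
    have hbval : ∀ (i j : Fin n) (h : i = j ∨ E i j), b ⟨(i, j), h⟩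
        = if i ∈ Cs ∧ j = jfn i then θ (pf i) - θ (pf i0) else a ⟨(i, j), h⟩ :=
      fun i j h => rfl
    -- the fixed-point linear relations
    have hstar : ∀ i, ∑ j, wmOf E a i j * Real.sin (θ j - θ i) = 0 := by
      intro i
      have hfx := hfix i
      set S : EuclideanSpace ℝ (Fin 2) := ∑ j, wmOf E a i j • x j with hS
      have hS0 : S ≠ 0 := by
        intro h0
        rw [h0, smul_zero] at hfx
        have h1 := hx1 i
        rw [← hfx] at h1
        simp at h1
      have hSr : S = ‖S‖ • x i := by
        conv_lhs => rw [← one_smul ℝ S]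
        rw [← mul_inv_cancel₀ (norm_ne_zero_iff.mpr hS0), mul_smul, hfx]
      have hcoord : ∀ k, ∑ j, wmOf E a i j * x j k = ‖S‖ * x i k := by
        intro k
        have h1 := congrArg (fun v : EuclideanSpace ℝ (Fin 2) =>
          (EuclideanSpace.proj k : EuclideanSpace ℝ (Fin 2) →L[ℝ] ℝ) v) hSr
        simp only [map_smul, smul_eq_mul] at h1
        rw [hS] at h1
        rw [map_sum] at h1
        simp only [map_smul, smul_eq_mul, PiLp.proj_apply] at h1
        exact h1
      calc ∑ j, wmOf E a i j * Real.sin (θ j - θ i)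
          = (∑ j, wmOf E a i j * x j 1) * x i 0 - (∑ j, wmOf E a i j * x j 0) * x i 1 := by
            rw [Finset.sum_mul, Finset.sum_mul, ← Finset.sum_sub_distrib]
            apply Finset.sum_congr rfl
            intro j _
            rw [hθc j, hθs j, hθc i, hθs i, Real.sin_sub]
            ring
        _ = 0 := by rw [hcoord 0, hcoord 1]; ring
    -- value of thF at b
    have hthF : ∀ v, Stmt18Aux.thF E pf κfun jfn b v = θ (pf v) - θ (pf i0) := by
      intro v
      unfold Stmt18Aux.thF
      have hC := hκC (pf v)
      have hE := (hjf _ hC).1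
      rw [Stmt18Aux.wm_apply, dif_pos (Or.inr hE), hbval]
      rw [if_pos ⟨hC, rfl⟩]
      rw [hpfκ v]
    -- value of cf at b
    have hcf : ∀ i j', Stmt18Aux.cf E pf σb κfun jfn b i j' = Real.sin (θ j' - θ i) := by
      intro i j'
      unfold Stmt18Aux.cf
      rw [hthF, hthF, hsgn, hsgn]
      have e : (θ (pf j') - θ (pf i0)) - (θ (pf i) - θ (pf i0)) = θ (pf j') - θ (pf i) := by
        ring
      rw [e]
      have key := Stmt18Aux.sin_shift (θ (pf j') - θ (pf i)) (θ j' - θ (pf j'))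
        (θ i - θ (pf i)) (hsymm j' (pf j') (hpf_rel j')) (hsymm i (pf i) (hpf_rel i))
      have e2 : (θ (pf j') - θ (pf i)) + (θ j' - θ (pf j')) - (θ i - θ (pf i))
          = θ j' - θ i := by ring
      rw [e2] at key
      rw [hsfun]
      exact key.symm
    -- membership in Nset
    have hbistar : wmOf E b istar (jfn istar) = 0 := by
      rw [Stmt18Aux.wm_apply, dif_pos (Or.inr hEistar), hbval]
      rw [if_pos ⟨histC, rfl⟩]
      rw [histdef, hpfκ i0, sub_self]
    -- membership in Uset
    have hmemU : b ∈ Stmt18Aux.Uset E pf σb κfun jfn Cs := by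
      intro i hi
      rw [hcf i (jfn i)]
      exact (hjf i hi).2
    -- G maps b to a
    have himg : Stmt18Aux.Gm E pf σb κfun jfn Cs b = a := by
      funext q
      obtain ⟨⟨i, j⟩, hq⟩ := q
      show Stmt18Aux.Gm E pf σb κfun jfn Cs b ⟨(i, j), hq⟩ = a ⟨(i, j), hq⟩
      unfold Stmt18Aux.Gm
      by_cases hcond : i ∈ Cs ∧ j = jfn i
      · rw [if_pos hcond]
        obtain ⟨hiC, hj⟩ := hcond
        subst hj
        have hD : Real.sin (θ (jfn i) - θ i) ≠ 0 := (hjf i hiC).2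
        have hbw : ∀ j', j' ≠ jfn i → wmOf E b i j' = wmOf E a i j' := by
          intro j' hne
          rw [Stmt18Aux.wm_apply, Stmt18Aux.wm_apply]
          by_cases h : i = j' ∨ E i j'
          · rw [dif_pos h, dif_pos h, hbval]
            rw [if_neg]
            intro hcc
            exact hne hcc.2
          · rw [dif_neg h, dif_neg h]
        have hsum : ∑ j' ∈ Finset.univ.erase (jfn i),
            wmOf E b i j' * Stmt18Aux.cf E pf σb κfun jfn b i j'
            = -(wmOf E a i (jfn i) * Real.sin (θ (jfn i) - θ i)) := by
          have h1 : ∀ j' ∈ Finset.univ.erase (jfn i),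
              wmOf E b i j' * Stmt18Aux.cf E pf σb κfun jfn b i j'
              = wmOf E a i j' * Real.sin (θ j' - θ i) := by
            intro j' hj'
            rw [hbw j' (Finset.ne_of_mem_erase hj'), hcf]
          rw [Finset.sum_congr rfl h1]
          have h2 := Finset.add_sum_erase Finset.univ
            (fun j' => wmOf E a i j' * Real.sin (θ j' - θ i)) (Finset.mem_univ (jfn i))
          rw [hstar i] at h2
          linarith
        rw [hsum, hcf, neg_neg, mul_div_assoc, div_self hD, mul_one]
        rw [Stmt18Aux.wm_apply, dif_pos hq]
      · rw [if_neg hcond]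
        rw [hbval]
        rw [if_neg hcond]
    refine Set.mem_iUnion.mpr ⟨⟨pf, σb, κfun, jfn, Cs, istar⟩, ?_⟩
    exact ⟨b, ⟨⟨Or.inr hEistar, hbistar⟩, hmemU⟩, himg⟩
  refine MeasureTheory.measure_mono_null hcover ?_
  exact MeasureTheory.measure_iUnion_null fun δ =>
    Stmt18Aux.volume_Gm_image E δ.1 δ.2.1 δ.2.2.1 δ.2.2.2.1 δ.2.2.2.2.1 δ.2.2.2.2.2

end
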